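/- Fix δ ∈ (0,1) and suppose G⁻(λ) ≥ ρ. Let D_1, …, D_N be i.i.d. samples from G, let Ĝᵘᶜ(x) = (1/N)·Σ_{i=1}^N 1{D_i ≤ x} be the empirical cumulative distribution function, and let q̂ = inf{x ∈ ℝ : Ĝᵘᶜ(x) ≥ ρ} be the sample ρ-th quantile. Then with probability at least 1 − δ, the following implication holds: if (1/N)·Σ_{i=1}^N 1{D_i < λ} ≥ ρ, then C_G(q̂) − C_G(q⋆_G) ≤ λ·(b+h)·√(log(2/δ)/(2N)). -/

import Mathlib

open MeasureTheory Set
open Filter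

/-- Newsvendor cost of ordering quantity `q` under demand distribution `F`,
with underage cost `b` and overage cost `h`. -/
noncomputable def nvCost (b h : ℝ) (F : Measure ℝ) (q : ℝ) : ℝ :=
  ∫ x, (b * max (x - q) 0 + h * max (q - x) 0) ∂F

/-- Optimal newsvendor quantity: the `ρ`-th quantile of `F`. -/
noncomputable def qStar (ρ : ℝ) (F : Measure ℝ) : ℝ :=
  sInf {q : ℝ | ρ ≤ (F (Iic q)).toReal}

/-- The set `𝒢` of admissible demand distributions: Borel probability measures on ℝ
supported on `[0, ∞)` with finite mean and optimal newsvendor quantity at most `M`. -/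
def GoodDist (ρ M : ℝ) : Set (Measure ℝ) :=
  {F | IsProbabilityMeasure F ∧ F (Iio 0) = 0 ∧ Integrable id F ∧ qStar ρ F ≤ M}

/-- The ambiguity set `𝒜_λ`: all admissible distributions agreeing with `G` before `lam`. -/
def Ambig (ρ M : ℝ) (G : Measure ℝ) (lam : ℝ) : Set (Measure ℝ) :=
  {F | F ∈ GoodDist ρ M ∧ ∀ x < lam, F (Iic x) = G (Iic x)}

/-- Worst-case regret of an ordering quantity `q` over the ambiguity set. -/
noncomputable def Regret (b h ρ M : ℝ) (G : Measure ℝ) (lam q : ℝ) : ℝ :=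
  sSup ((fun F => nvCost b h F q - nvCost b h F (qStar ρ F)) '' Ambig ρ M G lam)

/-- Minimax risk `Δ`. -/
noncomputable def Risk (b h ρ M : ℝ) (G : Measure ℝ) (lam : ℝ) : ℝ :=
  sInf (Regret b h ρ M G lam '' Icc 0 M)

/-- The unidentifiable ordering quantity `q†_G`. -/
noncomputable def qDagger (b h M : ℝ) (G : Measure ℝ) (lam : ℝ) : ℝ :=
  (b * M + h * lam - (b + h) * (G (Iio lam)).toReal * M) /
    ((b + h) * (1 - (G (Iio lam)).toReal))

/-- The two-point-tail distribution `F_p`: agrees with `G` on `[0, λ)`, places an atom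
of mass `p` at `λ` and an atom of mass `1 - p - G⁻(λ)` at `M`. -/
noncomputable def Fp (G : Measure ℝ) (lam M p : ℝ) : Measure ℝ :=
  G.restrict (Iio lam) + ENNReal.ofReal p • Measure.dirac lam +
    ENNReal.ofReal (1 - p - (G (Iio lam)).toReal) • Measure.dirac M

/-- The `N`-fold product (i.i.d.) measure of `G` (equal to `Measure.pi` whenever `G`
is sigma-finite, in particular for probability measures). -/
noncomputable def iidPi (N : ℕ) (G : Measure ℝ) : Measure (Fin N → ℝ) := by
  classical
  exact if h : SigmaFinite G then
    haveI := h
    Measure.pi fun _ => G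
  else 0

lemma hoeff_mgf (p : ℝ) (hp0 : 0 ≤ p) (hp1 : p ≤ 1) (t : ℝ) :
    1 - p + p * Real.exp t ≤ Real.exp (p * t + t ^ 2 / 8) := by
  rcases eq_or_lt_of_le hp0 with rfl | hp
  · simpa using Real.one_le_exp (by positivity)
  · set c : ℝ → ℝ := fun s => 1 - p + p * Real.exp s with hc
    have hcpos : ∀ s, 0 < c s := by
      intro s
      have : 0 < p * Real.exp s := by positivity
      simp only [hc]; linarith
    set ψ : ℝ → ℝ := fun s => p * s + s ^ 2 / 8 - Real.log (c s) with hψdef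
    set ψ1 : ℝ → ℝ := fun s => p + s / 4 - p * Real.exp s / c s with hψ1def
    have hcd : ∀ s, HasDerivAt c (p * Real.exp s) s := by
      intro s
      exact ((Real.hasDerivAt_exp s).const_mul p).const_add (1 - p)
    have hψd : ∀ s, HasDerivAt ψ (ψ1 s) s := by
      intro s
      have h1 : HasDerivAt (fun x : ℝ => p * x) p s := by
        simpa using (hasDerivAt_id s).const_mul p
      have h2 : HasDerivAt (fun x : ℝ => x ^ 2 / 8) (s / 4) s := by
        have := (hasDerivAt_pow 2 s).div_const 8
        norm_num at this
        rw [show s / 4 = 2 * s / 8 by ring]; exact this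
      have h3 : HasDerivAt (fun x => Real.log (c x)) (p * Real.exp s / c s) s :=
        (hcd s).log (ne_of_gt (hcpos s))
      exact (h1.add h2).sub h3
    have hψ1d : ∀ s, HasDerivAt ψ1 (1 / 4 - p * Real.exp s * (1 - p) / (c s) ^ 2) s := by
      intro s
      have h2 : HasDerivAt (fun x : ℝ => p + x / 4) (1 / 4) s := by
        simpa using ((hasDerivAt_id s).div_const 4).const_add p
      have h3 : HasDerivAt (fun x => p * Real.exp x / c x)
          ((p * Real.exp s * c s - p * Real.exp s * (p * Real.exp s)) / (c s) ^ 2) s :=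
        ((Real.hasDerivAt_exp s).const_mul p).div (hcd s) (ne_of_gt (hcpos s))
      have heq : (p * Real.exp s * c s - p * Real.exp s * (p * Real.exp s)) / (c s) ^ 2
          = p * Real.exp s * (1 - p) / (c s) ^ 2 := by
        congr 1
        simp only [hc]; ring
      rw [heq] at h3
      exact h2.sub h3
    have hψ1nonneg : ∀ s, 0 ≤ 1 / 4 - p * Real.exp s * (1 - p) / (c s) ^ 2 := by
      intro s
      rw [sub_nonneg, div_le_iff₀ (pow_pos (hcpos s) 2)]
      have h := sq_nonneg (1 - p - p * Real.exp s)
      have : (c s) ^ 2 = (1 - p + p * Real.exp s) ^ 2 := by simp [hc]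
      nlinarith [Real.exp_pos s]
    have hψ1mono : Monotone ψ1 :=
      monotone_of_deriv_nonneg (fun s => (hψ1d s).differentiableAt)
        (fun s => by rw [(hψ1d s).deriv]; exact hψ1nonneg s)
    have hψ10 : ψ1 0 = 0 := by
      simp only [hψ1def, Real.exp_zero, mul_one, hc]
      norm_num
    have hψdiff : Differentiable ℝ ψ := fun s => (hψd s).differentiableAt
    have hψ0 : ψ 0 = 0 := by
      simp [hψdef, hc]
    have key : ∀ s, 0 ≤ ψ s := by
      intro s
      rcases le_total 0 s with hs | hs
      · have := monotoneOn_of_deriv_nonneg (convex_Ici 0) hψdiff.continuous.continuousOn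
          (fun x _ => (hψdiff x).differentiableWithinAt)
          (fun x hx => by
            rw [(hψd x).deriv]
            have : (0:ℝ) ≤ x := le_of_lt (by simpa using hx)
            calc (0:ℝ) = ψ1 0 := hψ10.symm
              _ ≤ ψ1 x := hψ1mono this)
          (Set.self_mem_Ici) (Set.mem_Ici.mpr hs) hs
        linarith [hψ0 ▸ this]
      · have := antitoneOn_of_deriv_nonpos (convex_Iic 0) hψdiff.continuous.continuousOn
          (fun x _ => (hψdiff x).differentiableWithinAt)
          (fun x hx => by
            rw [(hψd x).deriv]
            have hx0 : x ≤ (0:ℝ) := le_of_lt (by simpa using hx)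
            calc ψ1 x ≤ ψ1 0 := hψ1mono hx0
              _ = 0 := hψ10)
          (Set.mem_Iic.mpr hs) (Set.self_mem_Iic) hs
        linarith [hψ0 ▸ this]
      
    have := key t
    have hlog : Real.log (c t) ≤ p * t + t ^ 2 / 8 := by
      simp only [hψdef] at this; linarith
    have := (Real.log_le_iff_le_exp (hcpos t)).mp hlog
    simpa [hc] using this

lemma integral_pi_pow {E : Type} [MeasurableSpace E] (μ : Measure E) [SigmaFinite μ]
    (N : ℕ) (f : E → ℝ) :
    ∫ x : Fin N → E, ∏ i, f (x i) ∂(Measure.pi fun _ => μ) = (∫ x, f x ∂μ) ^ N := by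
  letI : MeasureSpace E := ⟨μ⟩
  haveI : SigmaFinite (volume : Measure E) := ‹SigmaFinite μ›
  simpa using MeasureTheory.integral_fintype_prod_eq_pow (ι := Fin N) f (𝕜 := ℝ)

lemma chernoff (G : Measure ℝ) [IsProbabilityMeasure G] (N : ℕ) (A : Set ℝ)
    (hA : MeasurableSet A) (r : ℝ) (hp : (G A).toReal ≤ r) :
    Measure.pi (fun _ : Fin N => G) {d | r * N ≤ ∑ i, A.indicator 1 (d i)} ≤
      ENNReal.ofReal (Real.exp (-2 * N * (r - (G A).toReal) ^ 2)) := by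
  set μ := Measure.pi (fun _ : Fin N => G) with hμ
  haveI : IsProbabilityMeasure μ := by rw [hμ]; infer_instance
  set p := (G A).toReal with hpdef
  have hp0 : 0 ≤ p := ENNReal.toReal_nonneg
  have hp1 : p ≤ 1 := by
    rw [hpdef]
    exact ENNReal.toReal_le_of_le_ofReal zero_le_one (by simpa using prob_le_one (μ := G) (s := A))
  set t := 4 * (r - p) with htdef
  have ht : 0 ≤ t := by have := sub_nonneg.mpr hp; positivity
  set f : ℝ → ℝ := fun x => Real.exp (t * A.indicator 1 x) with hfdef
  set S : (Fin N → ℝ) → ℝ := fun d => ∑ i, A.indicator 1 (d i) with hSdef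
  set F : (Fin N → ℝ) → ℝ := fun d => Real.exp (t * S d) with hFdef
  have hFprod : ∀ d, F d = ∏ i, f (d i) := by
    intro d
    simp only [hFdef, hSdef, hfdef, Finset.mul_sum, Real.exp_sum]
  -- measurability and integrability of F
  have hfmeas : Measurable f := by
    apply Real.measurable_exp.comp
    exact ((measurable_one.indicator hA).const_mul t)
  have hFmeas : Measurable F := by
    have : Measurable fun d : Fin N → ℝ => ∏ i, f (d i) :=
      Finset.measurable_prod _ (fun i _ => hfmeas.comp (measurable_pi_apply i))
    simpa [funext hFprod] using this
  have hFbdd : ∀ d, ‖F d‖ ≤ Real.exp (t * N) := by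
    intro d
    rw [Real.norm_eq_abs, abs_of_pos (Real.exp_pos _), Real.exp_le_exp]
    apply mul_le_mul_of_nonneg_left _ ht
    calc S d ≤ ∑ i : Fin N, (1:ℝ) := by
          apply Finset.sum_le_sum; intro i _
          exact Set.indicator_le_self' (fun _ _ => zero_le_one) (d i)
      _ = N := by simp
  have hFint : Integrable F μ :=
    (integrable_const (Real.exp (t * N))).mono' hFmeas.aestronglyMeasurable
      (Filter.Eventually.of_forall hFbdd)
  -- Markov
  have hmarkov := mul_meas_ge_le_integral_of_nonneg
    (Filter.Eventually.of_forall fun d => le_of_lt (Real.exp_pos _)) hFint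
    (Real.exp (t * (r * N)))
  -- set inclusion
  have hsub : {d : Fin N → ℝ | r * N ≤ S d} ⊆ {d | Real.exp (t * (r * N)) ≤ F d} := by
    intro d hd
    simp only [mem_setOf_eq] at hd ⊢
    rw [hFdef, Real.exp_le_exp]
    exact mul_le_mul_of_nonneg_left hd ht
  -- compute ∫ f
  have hintf : ∫ x, f x ∂G = 1 - p + p * Real.exp t := by
    have : f = fun x => A.indicator (fun _ => Real.exp t - 1) x + 1 := by
      funext x
      by_cases hx : x ∈ A <;> simp [hfdef, hx, Set.indicator_of_mem, Set.indicator_of_notMem]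
    rw [this, integral_add ((integrable_const _).indicator hA) (integrable_const 1),
      integral_indicator_const _ hA, integral_const]
    simp [hpdef, measureReal_def]
    ring
  have hintf_nonneg : 0 ≤ ∫ x, f x ∂G := by
    rw [hintf]
    have := Real.exp_pos t
    nlinarith
  have hintF : ∫ d, F d ∂μ = (∫ x, f x ∂G) ^ N := by
    rw [hμ, funext hFprod]
    exact integral_pi_pow G N f
  -- bound
  have hbnd : (∫ x, f x ∂G) ^ N ≤ Real.exp (N * (p * t + t ^ 2 / 8)) := by
    calc (∫ x, f x ∂G) ^ N ≤ (Real.exp (p * t + t ^ 2 / 8)) ^ N := by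
          apply pow_le_pow_left₀ hintf_nonneg
          rw [hintf]; exact hoeff_mgf p hp0 hp1 t
      _ = Real.exp (N * (p * t + t ^ 2 / 8)) := by
          rw [← Real.exp_nat_mul]
  have hμtoReal : (μ {d | r * N ≤ S d}).toReal ≤ Real.exp (-2 * N * (r - p) ^ 2) := by
    have h1 : (μ {d | r * N ≤ S d}).toReal ≤ (μ {d | Real.exp (t * (r * N)) ≤ F d}).toReal := by
      apply ENNReal.toReal_mono (measure_ne_top μ _) (measure_mono hsub)
    have h2 : Real.exp (t * (r * N)) * (μ {d | Real.exp (t * (r * N)) ≤ F d}).toReal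
        ≤ Real.exp (N * (p * t + t ^ 2 / 8)) := by
      calc _ ≤ ∫ d, F d ∂μ := hmarkov
        _ = (∫ x, f x ∂G) ^ N := hintF
        _ ≤ _ := hbnd
    have h3 : (μ {d | Real.exp (t * (r * N)) ≤ F d}).toReal
        ≤ Real.exp (N * (p * t + t ^ 2 / 8)) / Real.exp (t * (r * N)) := by
      rw [le_div_iff₀ (Real.exp_pos _)]
      linarith [h2]
    calc (μ {d | r * N ≤ S d}).toReal ≤ _ := h1
      _ ≤ Real.exp (N * (p * t + t ^ 2 / 8)) / Real.exp (t * (r * N)) := h3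
      _ = Real.exp (N * (p * t + t ^ 2 / 8) - t * (r * N)) := by rw [← Real.exp_sub]
      _ ≤ Real.exp (-2 * N * (r - p) ^ 2) := by
          rw [Real.exp_le_exp]
          have : (N : ℝ) * (p * t + t ^ 2 / 8) - t * (r * N) = N * (-2 * (r - p) ^ 2) := by
            rw [htdef]; ring
          rw [this]; ring_nf; rfl
  calc μ {d | r * N ≤ S d} = ENNReal.ofReal (μ {d | r * N ≤ S d}).toReal :=
        (ENNReal.ofReal_toReal (measure_ne_top μ _)).symm
    _ ≤ ENNReal.ofReal (Real.exp (-2 * N * (r - p) ^ 2)) := ENNReal.ofReal_le_ofReal hμtoReal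

lemma nv_integrable (b h : ℝ) (G : Measure ℝ) [IsProbabilityMeasure G]
    (hint : Integrable id G) (q : ℝ) :
    Integrable (fun x => b * max (x - q) 0 + h * max (q - x) 0) G := by
  have h1 : Integrable (fun x : ℝ => max (x - q) 0) G := by
    simpa [id] using (hint.sub (integrable_const q)).pos_part
  have h2 : Integrable (fun x : ℝ => max (q - x) 0) G := by
    simpa [id] using ((integrable_const q).sub hint).pos_part
  exact (h1.const_mul b).add (h2.const_mul h)

lemma m_integral (G : Measure ℝ) [IsProbabilityMeasure G] (q₁ q₂ : ℝ) (h12 : q₁ ≤ q₂) :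
    ∫ x, min (max (q₂ - x) 0) (q₂ - q₁) ∂G
      = ∫ t in Ioc q₁ q₂, (G (Iic t)).toReal := by
  classical
  set ν := (volume : Measure ℝ).restrict (Ioc q₁ q₂) with hν
  haveI hfin : IsFiniteMeasure ν := by
    constructor
    rw [hν, Measure.restrict_apply_univ, Real.volume_Ioc]
    exact ENNReal.ofReal_lt_top
  set m' : ℝ → ℝ → ℝ := fun x t => if x ≤ t then (1:ℝ) else 0 with hm'
  have key1 : ∀ x, min (max (q₂ - x) 0) (q₂ - q₁) = ∫ t, m' x t ∂ν := by
    intro x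
    have hind : (fun t => m' x t) = (Ici x).indicator (fun _ => (1:ℝ)) := by
      funext t; by_cases hxt : x ≤ t <;>
        simp [hm', hxt, Set.indicator_apply, Set.mem_Ici]
    rw [hind, integral_indicator_const (1:ℝ) measurableSet_Ici, measureReal_def, hν,
      Measure.restrict_apply measurableSet_Ici]
    rcases le_or_gt x q₁ with hx | hx
    · have hset : Ici x ∩ Ioc q₁ q₂ = Ioc q₁ q₂ :=
        inter_eq_right.mpr (fun t ht => le_trans hx (le_of_lt ht.1))
      rw [hset, Real.volume_Ioc, ENNReal.toReal_ofReal (by linarith)]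
      rw [max_eq_left (by linarith), min_eq_right (by linarith)]
      simp
    · rcases le_or_gt x q₂ with hx2 | hx2
      · have hset : Ici x ∩ Ioc q₁ q₂ = Icc x q₂ := by
          ext t
          simp only [mem_inter_iff, mem_Ici, mem_Ioc, mem_Icc]
          exact ⟨fun ht => ⟨ht.1, ht.2.2⟩, fun ht => ⟨ht.1, lt_of_lt_of_le hx ht.1, ht.2⟩⟩
        rw [hset, Real.volume_Icc, ENNReal.toReal_ofReal (by linarith)]
        rw [max_eq_left (by linarith), min_eq_left (by linarith)]
        simp
      · have hset : Ici x ∩ Ioc q₁ q₂ = ∅ := by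
          ext t
          simp only [mem_inter_iff, mem_Ici, mem_Ioc, mem_empty_iff_false, iff_false, not_and,
            and_imp]
          intro h1 h2
          linarith
        rw [hset, max_eq_right (by linarith), min_eq_left (by linarith)]
        simp
  have key2 : ∀ t, (G (Iic t)).toReal = ∫ x, m' x t ∂G := by
    intro t
    have hind : (fun x => m' x t) = (Iic t).indicator (fun _ => (1:ℝ)) := by
      funext x; by_cases hxt : x ≤ t <;>
        simp [hm', hxt, Set.indicator_apply, Set.mem_Iic]
    rw [hind, integral_indicator_const (1:ℝ) measurableSet_Iic]
    simp [measureReal_def]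
  have hintm' : Integrable (Function.uncurry m') (G.prod ν) := by
    haveI : IsFiniteMeasure (G.prod ν) := by infer_instance
    have hmeas : Measurable (Function.uncurry m') := by
      have : Function.uncurry m' = fun p : ℝ × ℝ =>
          ({p : ℝ × ℝ | p.1 ≤ p.2}).indicator (fun _ => (1:ℝ)) p := by
        funext p
        by_cases hp : p.1 ≤ p.2 <;>
          simp [Function.uncurry, hm', hp, Set.indicator_apply]
      rw [this]
      exact (measurable_const.indicator (measurableSet_le measurable_fst measurable_snd))
    apply (integrable_const (1:ℝ)).mono' hmeas.aestronglyMeasurable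
    apply Filter.Eventually.of_forall
    intro p
    simp only [Function.uncurry, hm']
    split <;> simp
  calc ∫ x, min (max (q₂ - x) 0) (q₂ - q₁) ∂G = ∫ x, ∫ t, m' x t ∂ν ∂G := by
        congr 1; funext x; exact key1 x
    _ = ∫ t, ∫ x, m' x t ∂G ∂ν := integral_integral_swap hintm'
    _ = ∫ t, (G (Iic t)).toReal ∂ν := by
        congr 1; funext t; exact (key2 t).symm

lemma cost_diff (b h : ℝ) (G : Measure ℝ) [IsProbabilityMeasure G]
    (hint : Integrable id G) (q₁ q₂ : ℝ) (h12 : q₁ ≤ q₂) :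
    nvCost b h G q₂ - nvCost b h G q₁
      = (b + h) * (∫ t in Ioc q₁ q₂, (G (Iic t)).toReal) - b * (q₂ - q₁) := by
  have hptwise : ∀ x : ℝ,
      (b * max (x - q₂) 0 + h * max (q₂ - x) 0) - (b * max (x - q₁) 0 + h * max (q₁ - x) 0)
        = (b + h) * min (max (q₂ - x) 0) (q₂ - q₁) - b * (q₂ - q₁) := by
    intro x
    rcases le_or_gt x q₁ with h1 | h1
    · rw [max_eq_right (by linarith : x - q₂ ≤ 0), max_eq_left (by linarith : 0 ≤ q₂ - x),
        max_eq_right (by linarith : x - q₁ ≤ 0), max_eq_left (by linarith : 0 ≤ q₁ - x),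
        min_eq_right (by linarith)]
      ring
    · rcases le_or_gt x q₂ with h2 | h2
      · rw [max_eq_right (by linarith : x - q₂ ≤ 0), max_eq_left (by linarith : 0 ≤ q₂ - x),
          max_eq_left (by linarith : 0 ≤ x - q₁), max_eq_right (by linarith : q₁ - x ≤ 0),
          min_eq_left (by linarith)]
        ring
      · rw [max_eq_left (by linarith : 0 ≤ x - q₂), max_eq_right (by linarith : q₂ - x ≤ 0),
          max_eq_left (by linarith : 0 ≤ x - q₁), max_eq_right (by linarith : q₁ - x ≤ 0),
          min_eq_left (by linarith)]
        ring
  have hm_int : Integrable (fun x => min (max (q₂ - x) 0) (q₂ - q₁)) G := by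
    apply (integrable_const (q₂ - q₁)).mono'
    · apply Continuous.aestronglyMeasurable
      exact (((continuous_const.sub continuous_id).max continuous_const).min continuous_const)
    · apply Filter.Eventually.of_forall
      intro x
      have h0 : (0:ℝ) ≤ min (max (q₂ - x) 0) (q₂ - q₁) :=
        le_min (le_max_right _ _) (by linarith)
      rw [Real.norm_eq_abs, abs_of_nonneg h0]
      exact min_le_right _ _
  calc nvCost b h G q₂ - nvCost b h G q₁
      = ∫ x, ((b * max (x - q₂) 0 + h * max (q₂ - x) 0)
          - (b * max (x - q₁) 0 + h * max (q₁ - x) 0)) ∂G := by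
        rw [nvCost, nvCost, ← integral_sub (nv_integrable b h G hint q₂) (nv_integrable b h G hint q₁)]
    _ = ∫ x, ((b + h) * min (max (q₂ - x) 0) (q₂ - q₁) - b * (q₂ - q₁)) ∂G := by
        congr 1; funext x; exact hptwise x
    _ = (b + h) * (∫ x, min (max (q₂ - x) 0) (q₂ - q₁) ∂G) - b * (q₂ - q₁) := by
        rw [integral_sub (hm_int.const_mul (b + h)) (integrable_const _),
          integral_const_mul, integral_const]
        simp
    _ = (b + h) * (∫ t in Ioc q₁ q₂, (G (Iic t)).toReal) - b * (q₂ - q₁) := by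
        rw [m_integral G q₁ q₂ h12]

lemma cdf_csInf (G : Measure ℝ) [IsProbabilityMeasure G] (c : ℝ) (hc : 0 ≤ c)
    (hne : {q : ℝ | c ≤ (G (Iic q)).toReal}.Nonempty)
    (hbd : BddBelow {q : ℝ | c ≤ (G (Iic q)).toReal}) :
    c ≤ (G (Iic (sInf {q : ℝ | c ≤ (G (Iic q)).toReal}))).toReal := by
  set S := {q : ℝ | c ≤ (G (Iic q)).toReal} with hS
  set q := sInf S with hq
  have hseq : Iic q = ⋂ n : ℕ, Iic (q + 1 / (n + 1)) := by
    ext x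
    simp only [mem_Iic, mem_iInter]
    constructor
    · intro hx n
      have h1 : (0:ℝ) < 1 / ((n:ℝ) + 1) := by positivity
      linarith
    · intro hx
      by_contra hqx
      push_neg at hqx
      obtain ⟨n, hn⟩ := exists_nat_one_div_lt (sub_pos.mpr hqx)
      have := hx n
      linarith
  have hmem : ∀ n : ℕ, ENNReal.ofReal c ≤ G (Iic (q + 1 / (n + 1))) := by
    intro n
    have hlt : q < q + 1 / ((n:ℝ) + 1) := by
      have : (0:ℝ) < 1 / ((n:ℝ) + 1) := by positivity
      linarith
    obtain ⟨s, hsS, hs⟩ := (csInf_lt_iff hbd hne).mp hlt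
    calc ENNReal.ofReal c ≤ G (Iic s) := ENNReal.ofReal_le_of_le_toReal hsS
      _ ≤ G (Iic (q + 1 / (n + 1))) := measure_mono (Iic_subset_Iic.mpr (le_of_lt hs))
  have hanti : Antitone fun n : ℕ => Iic (q + 1 / ((n:ℝ) + 1)) := by
    intro m n hmn
    apply Iic_subset_Iic.mpr
    have : 1 / ((n:ℝ) + 1) ≤ 1 / ((m:ℝ) + 1) := by
      apply one_div_le_one_div_of_le (by positivity)
      exact_mod_cast add_le_add_left (Nat.cast_le.mpr hmn) 1
    linarith
  have htend := tendsto_measure_iInter_atTop (μ := G)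
    (fun n : ℕ => measurableSet_Iic.nullMeasurableSet) hanti ⟨0, measure_ne_top G _⟩
  have hlim : ENNReal.ofReal c ≤ G (⋂ n : ℕ, Iic (q + 1 / (n + 1))) :=
    ge_of_tendsto htend (Eventually.of_forall hmem)
  rw [← hseq] at hlim
  calc c = (ENNReal.ofReal c).toReal := (ENNReal.toReal_ofReal hc).symm
    _ ≤ (G (Iic q)).toReal := ENNReal.toReal_mono (measure_ne_top _ _) hlim

lemma cdf_iio (G : Measure ℝ) [IsProbabilityMeasure G] (c r : ℝ) (hc : 0 ≤ c)
    (hlt : ∀ t, t < r → (G (Iic t)).toReal ≤ c) :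
    (G (Iio r)).toReal ≤ c := by
  have hseq : Iio r = ⋃ n : ℕ, Iic (r - 1 / (n + 1)) := by
    ext x
    simp only [mem_Iio, mem_iUnion, mem_Iic]
    constructor
    · intro hx
      obtain ⟨n, hn⟩ := exists_nat_one_div_lt (sub_pos.mpr hx)
      exact ⟨n, by linarith⟩
    · intro ⟨n, hn⟩
      have : (0:ℝ) < 1 / ((n:ℝ) + 1) := by positivity
      linarith
  have hmono : Monotone fun n : ℕ => Iic (r - 1 / ((n:ℝ) + 1)) := by
    intro m n hmn
    apply Iic_subset_Iic.mpr
    have : 1 / ((n:ℝ) + 1) ≤ 1 / ((m:ℝ) + 1) := by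
      apply one_div_le_one_div_of_le (by positivity)
      exact_mod_cast add_le_add_left (Nat.cast_le.mpr hmn) 1
    linarith
  have htend := tendsto_measure_iUnion_atTop (μ := G) hmono
  have hbnd : ∀ n : ℕ, G (Iic (r - 1 / ((n:ℝ) + 1))) ≤ ENNReal.ofReal c := by
    intro n
    apply (ENNReal.le_ofReal_iff_toReal_le (measure_ne_top _ _) hc).mpr
    apply hlt
    have : (0:ℝ) < 1 / ((n:ℝ) + 1) := by positivity
    linarith
  have hlim : G (⋃ n : ℕ, Iic (r - 1 / (n + 1))) ≤ ENNReal.ofReal c :=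
    le_of_tendsto htend (Eventually.of_forall hbnd)
  rw [← hseq] at hlim
  calc (G (Iio r)).toReal ≤ (ENNReal.ofReal c).toReal :=
        ENNReal.toReal_mono ENNReal.ofReal_ne_top hlim
    _ = c := ENNReal.toReal_ofReal hc

set_option maxHeartbeats 2000000 in
/-- with probability at least `1 - δ`, if the empirical mass strictly below `λ`
is at least `ρ`, then the SAA quantile has small excess newsvendor cost. -/
theorem stmt14 (b h : ℝ) (hb : 0 < b) (hh : 0 < h)
    (ρ : ℝ) (hρ : ρ = b / (b + h))
    (G : Measure ℝ) [IsProbabilityMeasure G] (hsupp : G (Iio 0) = 0)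
    (hint : Integrable id G)
    (lam : ℝ) (hlam : 0 ≤ lam) (hcen : ρ ≤ (G (Iio lam)).toReal)
    (N : ℕ) (hN : 1 ≤ N) (δ : ℝ) (hδ : δ ∈ Ioo (0 : ℝ) 1) :
    ENNReal.ofReal (1 - δ) ≤
      iidPi N G {d : Fin N → ℝ |
        ρ ≤ (1 / (N : ℝ)) * ∑ i, (if d i < lam then (1 : ℝ) else 0) →
        nvCost b h G
            (sInf {x : ℝ | ρ ≤ (1 / (N : ℝ)) * ∑ i, (if d i ≤ x then (1 : ℝ) else 0)})
          - nvCost b h G (qStar ρ G)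
          ≤ lam * (b + h) * Real.sqrt (Real.log (2 / δ) / (2 * N))} := by
  obtain ⟨hδ0, hδ1⟩ := hδ
  have hbh : 0 < b + h := by linarith
  have hρ0 : 0 < ρ := by rw [hρ]; positivity
  have hρ1 : ρ < 1 := by rw [hρ, div_lt_one hbh]; linarith
  have hρb : (b + h) * ρ = b := by rw [hρ]; field_simp
  have hN0 : (0 : ℝ) < (N : ℝ) := by exact_mod_cast Nat.lt_of_lt_of_le Nat.zero_lt_one hN
  set ε := Real.sqrt (Real.log (2 / δ) / (2 * N)) with hεdef
  have hlogpos : 0 < Real.log (2 / δ) := Real.log_pos (by rw [lt_div_iff₀ hδ0]; linarith)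
  have hε0 : 0 ≤ ε := Real.sqrt_nonneg _
  have hε2 : ε ^ 2 = Real.log (2 / δ) / (2 * N) := Real.sq_sqrt (by positivity)
  have hexpε : Real.exp (-2 * N * ε ^ 2) = δ / 2 := by
    rw [hε2]
    have heq : -2 * (N : ℝ) * (Real.log (2 / δ) / (2 * N)) = -Real.log (2 / δ) := by
      field_simp
    rw [heq, Real.exp_neg, Real.exp_log (by positivity), inv_div]
  -- the iid measure
  have hiid : iidPi N G = Measure.pi (fun _ : Fin N => G) := by
    unfold iidPi
    rw [dif_pos (inferInstance : SigmaFinite G)]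
  rw [hiid]
  set μ := Measure.pi (fun _ : Fin N => G) with hμdef
  haveI : IsProbabilityMeasure μ := by rw [hμdef]; infer_instance
  -- CDF facts
  have hmono : ∀ s t : ℝ, s ≤ t → (G (Iic s)).toReal ≤ (G (Iic t)).toReal := fun s t hst =>
    ENNReal.toReal_mono (measure_ne_top _ _) (measure_mono (Iic_subset_Iic.mpr hst))
  have hcdf1 : ∀ t : ℝ, (G (Iic t)).toReal ≤ 1 := fun t =>
    ENNReal.toReal_le_of_le_ofReal zero_le_one (by simpa using prob_le_one (μ := G) (s := Iic t))
  have hcdfneg : ∀ t : ℝ, t < 0 → (G (Iic t)).toReal = 0 := by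
    intro t ht
    have h0 : G (Iic t) = 0 :=
      measure_mono_null (fun x hx => lt_of_le_of_lt hx ht) hsupp
    simp [h0]
  have hΦlam : ρ ≤ (G (Iic lam)).toReal :=
    le_trans hcen (ENNReal.toReal_mono (measure_ne_top _ _) (measure_mono Iio_subset_Iic_self))
  -- qStar facts
  have hlb : ∀ x ∈ {q : ℝ | ρ ≤ (G (Iic q)).toReal}, (0 : ℝ) ≤ x := by
    intro x hx
    by_contra hx0
    push_neg at hx0
    rw [mem_setOf_eq, hcdfneg x hx0] at hx
    linarith
  have hSne : ({q : ℝ | ρ ≤ (G (Iic q)).toReal}).Nonempty := ⟨lam, hΦlam⟩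
  have hSbd : BddBelow {q : ℝ | ρ ≤ (G (Iic q)).toReal} := ⟨0, hlb⟩
  have hqs0 : 0 ≤ qStar ρ G := le_csInf hSne hlb
  have hqslam : qStar ρ G ≤ lam := csInf_le hSbd hΦlam
  -- B1 : upper deviation event
  have hB1 : ∃ B1 : Set (Fin N → ℝ), μ B1 ≤ ENNReal.ofReal (δ / 2) ∧
      ∀ d : Fin N → ℝ, d ∉ B1 →
        BddBelow {x : ℝ | ρ ≤ (1 / (N : ℝ)) * ∑ i, (if d i ≤ x then (1 : ℝ) else 0)} →
        ∀ t, t < sInf {x : ℝ | ρ ≤ (1 / (N : ℝ)) * ∑ i, (if d i ≤ x then (1 : ℝ) else 0)} →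
        (G (Iic t)).toReal < ρ + ε := by
    by_cases hSU : ({q : ℝ | ρ + ε ≤ (G (Iic q)).toReal}).Nonempty
    · set qU := sInf {q : ℝ | ρ + ε ≤ (G (Iic q)).toReal} with hqU
      have hlbU : ∀ x ∈ {q : ℝ | ρ + ε ≤ (G (Iic q)).toReal}, (0 : ℝ) ≤ x := by
        intro x hx
        by_contra hx0
        push_neg at hx0
        rw [mem_setOf_eq, hcdfneg x hx0] at hx
        linarith
      have hbdU : BddBelow {q : ℝ | ρ + ε ≤ (G (Iic q)).toReal} := ⟨0, hlbU⟩
      have hUmem : ρ + ε ≤ (G (Iic qU)).toReal :=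
        cdf_csInf G (ρ + ε) (by positivity) hSU hbdU
      refine ⟨{d : Fin N → ℝ | (1 - ρ) * N ≤ ∑ i, (Ioi qU).indicator 1 (d i)}, ?_, ?_⟩
      · have hcompl : (G (Ioi qU)).toReal = 1 - (G (Iic qU)).toReal := by
          have hio : Ioi qU = (Iic qU)ᶜ := Set.compl_Iic.symm
          rw [hio, measure_compl measurableSet_Iic (measure_ne_top _ _), measure_univ,
            ENNReal.toReal_sub_of_le prob_le_one ENNReal.one_ne_top, ENNReal.toReal_one]
        have hp : (G (Ioi qU)).toReal ≤ 1 - ρ - ε := by rw [hcompl]; linarith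
        calc μ {d : Fin N → ℝ | (1 - ρ) * N ≤ ∑ i, (Ioi qU).indicator 1 (d i)}
            ≤ ENNReal.ofReal (Real.exp (-2 * N * ((1 - ρ) - (G (Ioi qU)).toReal) ^ 2)) :=
              chernoff G N (Ioi qU) measurableSet_Ioi (1 - ρ) (by linarith)
          _ ≤ ENNReal.ofReal (δ / 2) := by
              apply ENNReal.ofReal_le_ofReal
              rw [← hexpε]
              apply Real.exp_le_exp.mpr
              have h1 : ε ≤ (1 - ρ) - (G (Ioi qU)).toReal := by linarith
              have h2 : ε ^ 2 ≤ ((1 - ρ) - (G (Ioi qU)).toReal) ^ 2 :=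
                pow_le_pow_left₀ hε0 h1 2
              nlinarith
      · intro d hdB1 hbd t ht
        have hsum : ∑ i, (Ioi qU).indicator (1 : ℝ → ℝ) (d i) < (1 - ρ) * N := by
          by_contra hcon
          push_neg at hcon
          exact hdB1 hcon
        have hflip : ρ * N < ∑ i, (if d i ≤ qU then (1 : ℝ) else 0) := by
          have hsplit : ∀ i, (Ioi qU).indicator (1 : ℝ → ℝ) (d i)
              = 1 - (if d i ≤ qU then (1 : ℝ) else 0) := by
            intro i
            by_cases hi : d i ≤ qU
            · simp [Set.indicator_apply, mem_Ioi, not_lt.mpr hi, hi]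
            · simp [Set.indicator_apply, mem_Ioi, lt_of_not_ge hi, hi]
          rw [Finset.sum_congr rfl (fun i _ => hsplit i), Finset.sum_sub_distrib,
            Finset.sum_const, Finset.card_univ, Fintype.card_fin, nsmul_eq_mul, mul_one] at hsum
          linarith
        have hqUmem : ρ ≤ (1 / (N : ℝ)) * ∑ i, (if d i ≤ qU then (1 : ℝ) else 0) := by
          rw [one_div, inv_mul_eq_div, le_div_iff₀ hN0]
          linarith
        have hqleU : sInf {x : ℝ | ρ ≤ (1 / (N : ℝ)) * ∑ i, (if d i ≤ x then (1 : ℝ) else 0)}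
            ≤ qU := csInf_le hbd hqUmem
        have htU : t < qU := lt_of_lt_of_le ht hqleU
        by_contra hcon
        push_neg at hcon
        exact absurd (csInf_le hbdU hcon) (not_le.mpr htU)
    · refine ⟨∅, by simp, ?_⟩
      intro d _ _ t _
      by_contra hcon
      push_neg at hcon
      exact hSU ⟨t, hcon⟩
  -- B2 : lower deviation event
  have hB2 : ∃ B2 : Set (Fin N → ℝ), μ B2 ≤ ENNReal.ofReal (δ / 2) ∧
      ∀ d : Fin N → ℝ, d ∉ B2 →
        ({x : ℝ | ρ ≤ (1 / (N : ℝ)) * ∑ i, (if d i ≤ x then (1 : ℝ) else 0)}).Nonempty →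
        BddBelow {x : ℝ | ρ ≤ (1 / (N : ℝ)) * ∑ i, (if d i ≤ x then (1 : ℝ) else 0)} →
        ∀ t, sInf {x : ℝ | ρ ≤ (1 / (N : ℝ)) * ∑ i, (if d i ≤ x then (1 : ℝ) else 0)} < t →
        ρ - ε ≤ (G (Iic t)).toReal := by
    by_cases hcase : ρ - ε ≤ 0
    · refine ⟨∅, by simp, ?_⟩
      intro d _ _ _ t _
      exact le_trans hcase ENNReal.toReal_nonneg
    · push_neg at hcase
      have hLne : ({q : ℝ | ρ - ε ≤ (G (Iic q)).toReal}).Nonempty :=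
        ⟨lam, by rw [mem_setOf_eq]; linarith⟩
      have hlbL : ∀ x ∈ {q : ℝ | ρ - ε ≤ (G (Iic q)).toReal}, (0 : ℝ) ≤ x := by
        intro x hx
        by_contra hx0
        push_neg at hx0
        rw [mem_setOf_eq, hcdfneg x hx0] at hx
        linarith
      have hbdL : BddBelow {q : ℝ | ρ - ε ≤ (G (Iic q)).toReal} := ⟨0, hlbL⟩
      set qL := sInf {q : ℝ | ρ - ε ≤ (G (Iic q)).toReal} with hqL
      have hLlt : ∀ t, t < qL → (G (Iic t)).toReal ≤ ρ - ε := by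
        intro t htL
        by_contra hcon
        push_neg at hcon
        have : t ∈ {q : ℝ | ρ - ε ≤ (G (Iic q)).toReal} := le_of_lt hcon
        exact absurd (csInf_le hbdL this) (not_le.mpr htL)
      have hIioL : (G (Iio qL)).toReal ≤ ρ - ε := cdf_iio G (ρ - ε) qL (le_of_lt hcase) hLlt
      refine ⟨{d : Fin N → ℝ | ρ * N ≤ ∑ i, (Iio qL).indicator 1 (d i)}, ?_, ?_⟩
      · calc μ {d : Fin N → ℝ | ρ * N ≤ ∑ i, (Iio qL).indicator 1 (d i)}
            ≤ ENNReal.ofReal (Real.exp (-2 * N * (ρ - (G (Iio qL)).toReal) ^ 2)) :=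
              chernoff G N (Iio qL) measurableSet_Iio ρ (by linarith)
          _ ≤ ENNReal.ofReal (δ / 2) := by
              apply ENNReal.ofReal_le_ofReal
              rw [← hexpε]
              apply Real.exp_le_exp.mpr
              have h1 : ε ≤ ρ - (G (Iio qL)).toReal := by linarith
              have h2 : ε ^ 2 ≤ (ρ - (G (Iio qL)).toReal) ^ 2 := pow_le_pow_left₀ hε0 h1 2
              nlinarith
      · intro d hdB2 hne hbd t ht
        have hqLle : qL ≤ sInf {x : ℝ | ρ ≤ (1 / (N : ℝ)) * ∑ i, (if d i ≤ x then (1 : ℝ) else 0)} := by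
          by_contra hcon
          push_neg at hcon
          obtain ⟨x, hxS, hxlt⟩ := (csInf_lt_iff hbd hne).mp hcon
          rw [mem_setOf_eq] at hxS
          have hterm : ∀ i, (if d i ≤ x then (1 : ℝ) else 0) ≤ (Iio qL).indicator 1 (d i) := by
            intro i
            by_cases hi : d i ≤ x
            · rw [if_pos hi]
              have : d i ∈ Iio qL := lt_of_le_of_lt hi hxlt
              simp [Set.indicator_of_mem this]
            · rw [if_neg hi]
              exact Set.indicator_nonneg (fun _ _ => zero_le_one) _
          have hsums := Finset.sum_le_sum (fun i (_ : i ∈ Finset.univ) => hterm i)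
          have hxS' : ρ * N ≤ ∑ i, (if d i ≤ x then (1 : ℝ) else 0) := by
            rw [one_div, inv_mul_eq_div, le_div_iff₀ hN0] at hxS
            linarith
          exact hdB2 (le_trans hxS' hsums)
        have hqLt : qL < t := lt_of_le_of_lt hqLle ht
        obtain ⟨s, hsS, hslt⟩ := (csInf_lt_iff hbdL hLne).mp hqLt
        rw [mem_setOf_eq] at hsS
        exact le_trans hsS (hmono s t (le_of_lt hslt))
  -- E0 : nonnegativity event
  have hE0meas : MeasurableSet {d : Fin N → ℝ | ∀ i, 0 ≤ d i} := by
    have hpi : {d : Fin N → ℝ | ∀ i, 0 ≤ d i} = Set.pi univ (fun _ => Ici 0) := by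
      ext d; simp [Set.mem_pi, Pi.le_def]
    rw [hpi]
    exact MeasurableSet.pi countable_univ (fun _ _ => measurableSet_Ici)
  have hE0 : μ ({d : Fin N → ℝ | ∀ i, 0 ≤ d i}ᶜ) = 0 := by
    have hpi : {d : Fin N → ℝ | ∀ i, 0 ≤ d i} = Set.pi univ (fun _ => Ici 0) := by
      ext d; simp [Set.mem_pi, Pi.le_def]
    have hG : G (Ici 0) = 1 := by
      rw [← Set.compl_Iio, measure_compl measurableSet_Iio (measure_ne_top _ _), measure_univ,
        hsupp]
      simp
    have h1 : μ {d : Fin N → ℝ | ∀ i, 0 ≤ d i} = 1 := by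
      rw [hpi, hμdef, Measure.pi_pi]
      simp [hG]
    rw [measure_compl hE0meas (measure_ne_top _ _), h1, measure_univ]
    simp
  -- assemble the good event
  obtain ⟨B1, hB1small, hB1prop⟩ := hB1
  obtain ⟨B2, hB2small, hB2prop⟩ := hB2
  set E := (B1 ∪ B2 ∪ {d : Fin N → ℝ | ∀ i, 0 ≤ d i}ᶜ)ᶜ with hE
  -- measure of E
  have hEcompl : μ Eᶜ ≤ ENNReal.ofReal δ := by
    rw [hE, compl_compl]
    calc μ (B1 ∪ B2 ∪ {d : Fin N → ℝ | ∀ i, 0 ≤ d i}ᶜ)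
        ≤ μ (B1 ∪ B2) + μ ({d : Fin N → ℝ | ∀ i, 0 ≤ d i}ᶜ) := measure_union_le _ _
      _ ≤ (μ B1 + μ B2) + 0 := add_le_add (measure_union_le _ _) (le_of_eq hE0)
      _ = μ B1 + μ B2 := by rw [add_zero]
      _ ≤ ENNReal.ofReal (δ / 2) + ENNReal.ofReal (δ / 2) := add_le_add hB1small hB2small
      _ = ENNReal.ofReal δ := by
          rw [← ENNReal.ofReal_add (by linarith) (by linarith)]
          norm_num
  have hEmeasure : ENNReal.ofReal (1 - δ) ≤ μ E := by
    have huniv : (1 : ENNReal) ≤ μ E + μ Eᶜ := by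
      rw [← measure_univ (μ := μ), ← Set.union_compl_self E]
      exact measure_union_le E Eᶜ
    have hsum : ENNReal.ofReal (1 - δ) + ENNReal.ofReal δ = 1 := by
      rw [← ENNReal.ofReal_add (by linarith) (by linarith)]
      norm_num
    have h2 : ENNReal.ofReal (1 - δ) + ENNReal.ofReal δ ≤ μ E + ENNReal.ofReal δ := by
      rw [hsum]
      exact le_trans huniv (add_le_add_right hEcompl _)
    exact ENNReal.le_of_add_le_add_right ENNReal.ofReal_ne_top h2
  refine le_trans hEmeasure (measure_mono ?_)
  -- E is contained in the target event
  intro d hd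
  rw [hE, mem_compl_iff, mem_union, mem_union] at hd
  push_neg at hd
  obtain ⟨⟨hd1, hd2⟩, hd0'⟩ := hd
  have hd0 : ∀ i, 0 ≤ d i := by
    by_contra hcon
    exact hd0' hcon
  rw [mem_setOf_eq]
  intro H
  -- empirical quantile facts
  haveI hFinNe : Nonempty (Fin N) := ⟨⟨0, Nat.lt_of_lt_of_le Nat.zero_lt_one hN⟩⟩
  set Sd := {x : ℝ | ρ ≤ (1 / (N : ℝ)) * ∑ i, (if d i ≤ x then (1 : ℝ) else 0)} with hSd
  have hSdlb : ∀ x ∈ Sd, (0 : ℝ) ≤ x := by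
    intro x hx
    by_contra h0
    push_neg at h0
    have hz : ∀ i, (if d i ≤ x then (1 : ℝ) else 0) = 0 := fun i =>
      if_neg (not_le.mpr (lt_of_lt_of_le h0 (hd0 i)))
    have hx' : ρ ≤ (1 / (N : ℝ)) * ∑ i, (if d i ≤ x then (1 : ℝ) else 0) := hx
    rw [Finset.sum_congr rfl (fun i _ => hz i)] at hx'
    simp at hx'
    linarith
  have hSdbd : BddBelow Sd := ⟨0, hSdlb⟩
  have hSdne : Sd.Nonempty := by
    refine ⟨Finset.univ.sup' Finset.univ_nonempty d, ?_⟩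
    show ρ ≤ (1 / (N : ℝ)) * ∑ i, (if d i ≤ Finset.univ.sup' Finset.univ_nonempty d then (1 : ℝ) else 0)
    have hone : ∀ i, (if d i ≤ Finset.univ.sup' Finset.univ_nonempty d then (1 : ℝ) else 0) = 1 :=
      fun i => if_pos (Finset.le_sup' d (Finset.mem_univ i))
    rw [Finset.sum_congr rfl (fun i _ => hone i), Finset.sum_const, Finset.card_univ,
      Fintype.card_fin, nsmul_eq_mul, mul_one, one_div, inv_mul_cancel₀ (ne_of_gt hN0)]
    linarith
  set qhat := sInf Sd with hqhat
  have hq0 : 0 ≤ qhat := le_csInf hSdne hSdlb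
  have hqlam : qhat ≤ lam := by
    have hpos : ∃ i, d i < lam := by
      by_contra hno
      push_neg at hno
      have hz : ∀ i, (if d i < lam then (1 : ℝ) else 0) = 0 := fun i =>
        if_neg (not_lt.mpr (hno i))
      rw [Finset.sum_congr rfl (fun i _ => hz i)] at H
      simp at H
      linarith
    obtain ⟨i0, hi0⟩ := hpos
    set T := Finset.univ.filter (fun i => d i < lam) with hT
    have hTne : T.Nonempty := ⟨i0, by simp [hT, hi0]⟩
    set m := T.sup' hTne d with hm
    have hmlt : m < lam := (Finset.sup'_lt_iff hTne).mpr (fun i hi => by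
      rw [hT, Finset.mem_filter] at hi
      exact hi.2)
    have hmm : m ∈ Sd := by
      show ρ ≤ (1 / (N : ℝ)) * ∑ i, (if d i ≤ m then (1 : ℝ) else 0)
      have hterm : ∀ i, (if d i < lam then (1 : ℝ) else 0) ≤ (if d i ≤ m then (1 : ℝ) else 0) := by
        intro i
        by_cases hi : d i < lam
        · rw [if_pos hi, if_pos (Finset.le_sup' d (by simp [hT, hi]))]
        · rw [if_neg hi]
          have : (0:ℝ) ≤ if d i ≤ m then (1:ℝ) else 0 := by split <;> norm_num
          linarith
      calc ρ ≤ (1 / (N : ℝ)) * ∑ i, (if d i < lam then (1 : ℝ) else 0) := H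
        _ ≤ (1 / (N : ℝ)) * ∑ i, (if d i ≤ m then (1 : ℝ) else 0) := by
            apply mul_le_mul_of_nonneg_left
              (Finset.sum_le_sum (fun i _ => hterm i)) (by positivity)
    exact le_trans (csInf_le hSdbd hmm) (le_of_lt hmlt)
  have hup : ∀ t, t < qhat → (G (Iic t)).toReal < ρ + ε := hB1prop d hd1 hSdbd
  have hlo : ∀ t, qhat < t → ρ - ε ≤ (G (Iic t)).toReal := hB2prop d hd2 hSdne hSdbd
  -- integrability helpers
  have hΦmeas : Measurable fun t : ℝ => (G (Iic t)).toReal :=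
    Monotone.measurable (fun s t hst => hmono s t hst)
  have hΦint : ∀ a c : ℝ, Integrable (fun t => (G (Iic t)).toReal) (volume.restrict (Ioo a c)) := by
    intro a c
    haveI : IsFiniteMeasure (volume.restrict (Ioo a c)) := by
      constructor
      rw [Measure.restrict_apply_univ, Real.volume_Ioo]
      exact ENNReal.ofReal_lt_top
    apply (integrable_const (1 : ℝ)).mono' hΦmeas.aestronglyMeasurable.restrict
    apply Eventually.of_forall
    intro t
    rw [Real.norm_eq_abs, abs_of_nonneg ENNReal.toReal_nonneg]
    exact hcdf1 t
  show nvCost b h G qhat - nvCost b h G (qStar ρ G) ≤ lam * (b + h) * ε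
  rcases le_total (qStar ρ G) qhat with hcc | hcc
  · rw [cost_diff b h G hint (qStar ρ G) qhat hcc]
    have hbound : ∫ t in Ioc (qStar ρ G) qhat, (G (Iic t)).toReal
        ≤ (ρ + ε) * (qhat - qStar ρ G) := by
      rw [integral_Ioc_eq_integral_Ioo]
      calc ∫ t in Ioo (qStar ρ G) qhat, (G (Iic t)).toReal
          ≤ ∫ _t in Ioo (qStar ρ G) qhat, (ρ + ε) :=
            setIntegral_mono_on (hΦint _ _) (integrable_const _) measurableSet_Ioo
              (fun t ht => le_of_lt (hup t ht.2))
        _ = (ρ + ε) * (qhat - qStar ρ G) := by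
            rw [setIntegral_const, measureReal_def, Real.volume_Ioo, ENNReal.toReal_ofReal (by linarith),
              smul_eq_mul]
            ring
    have hmul : (b + h) * (∫ t in Ioc (qStar ρ G) qhat, (G (Iic t)).toReal)
        ≤ (b + h) * ((ρ + ε) * (qhat - qStar ρ G)) :=
      mul_le_mul_of_nonneg_left hbound (le_of_lt hbh)
    have hΔ : qhat - qStar ρ G ≤ lam := by linarith
    have heq : (b + h) * ((ρ + ε) * (qhat - qStar ρ G)) - b * (qhat - qStar ρ G)
        = (b + h) * ε * (qhat - qStar ρ G) := by
      linear_combination (qhat - qStar ρ G) * hρb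
    have hfin : (b + h) * ε * (qhat - qStar ρ G) ≤ lam * (b + h) * ε := by
      have h1 : (b + h) * ε * (qhat - qStar ρ G) ≤ (b + h) * ε * lam :=
        mul_le_mul_of_nonneg_left hΔ (by positivity)
      linarith [h1]
    linarith
  · have hflip : nvCost b h G qhat - nvCost b h G (qStar ρ G)
        = -(nvCost b h G (qStar ρ G) - nvCost b h G qhat) := by ring
    rw [hflip, cost_diff b h G hint qhat (qStar ρ G) hcc]
    have hbound : (ρ - ε) * (qStar ρ G - qhat)
        ≤ ∫ t in Ioc qhat (qStar ρ G), (G (Iic t)).toReal := by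
      rw [integral_Ioc_eq_integral_Ioo]
      calc (ρ - ε) * (qStar ρ G - qhat)
          = ∫ _t in Ioo qhat (qStar ρ G), (ρ - ε) := by
            rw [setIntegral_const, measureReal_def, Real.volume_Ioo, ENNReal.toReal_ofReal (by linarith),
              smul_eq_mul]
            ring
        _ ≤ ∫ t in Ioo qhat (qStar ρ G), (G (Iic t)).toReal :=
            setIntegral_mono_on (integrable_const _) (hΦint _ _) measurableSet_Ioo
              (fun t ht => hlo t ht.1)
    have hmul : (b + h) * ((ρ - ε) * (qStar ρ G - qhat))
        ≤ (b + h) * (∫ t in Ioc qhat (qStar ρ G), (G (Iic t)).toReal) :=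
      mul_le_mul_of_nonneg_left hbound (le_of_lt hbh)
    have hΔ : qStar ρ G - qhat ≤ lam := by linarith
    have heq : b * (qStar ρ G - qhat) - (b + h) * ((ρ - ε) * (qStar ρ G - qhat))
        = (b + h) * ε * (qStar ρ G - qhat) := by
      linear_combination (-(qStar ρ G - qhat)) * hρb
    have hfin : (b + h) * ε * (qStar ρ G - qhat) ≤ lam * (b + h) * ε := by
      have h1 : (b + h) * ε * (qStar ρ G - qhat) ≤ (b + h) * ε * lam :=
        mul_le_mul_of_nonneg_left hΔ (by positivity)
      linarith [h1]
    linarith
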